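/- Fix positive reals γ̄1, γ̄2, ζ̄1, ζ̄2 with γ̄1 ≠ ζ̄1 and γ̄2 ≠ ζ̄2. Let E1, E2, E'1, E'2, Z1, Z2 be mutually independent random variables, where Ei and E'i are exponentially distributed with mean γ̄i and Zi is exponentially distributed with mean ζ̄i. Set γi = Ei and κi = E'i + Zi. Fix R1, R2 > 0, B1, B2, Bsum > 0, T1, T2, Tsum > 0, and set T̂i = 2^{Ri/(Bi Ti)} − 1 and T̂sum = 2^{(R1+R2)/(Bsum Tsum)} − 1. Then P( {R1/(B1 log2(1+γ1)) > T1} ∪ {R2/(B2 log2(1+γ2)) > T2} ∪ {(R1+R2)/(Bsum · min(log2(1+κ1), log2(1+κ2))) > Tsum} ) = 1 − e^{−T̂1/γ̄1} · e^{−T̂2/γ̄2} · ∏_{i=1,2} (γ̄i e^{−T̂sum/γ̄i} − ζ̄i e^{−T̂sum/ζ̄i})/(γ̄i − ζ̄i). -/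

import Mathlib

open MeasureTheory ProbabilityTheory Real

/-- The law of an exponentially distributed random variable with mean `θ`: density
`t ↦ (1/θ)·exp(−t/θ)` w.r.t. Lebesgue measure on `[0, ∞)`, density `0` on `(−∞, 0)`. -/
noncomputable def expLaw (θ : ℝ) : Measure ℝ :=
  volume.withDensity fun t => ENNReal.ofReal (if 0 ≤ t then (1 / θ) * Real.exp (-t / θ) else 0)

/-- `X` is exponentially distributed with mean `θ` (under `μ`). -/
def IsExpMean {Ω : Type*} [MeasurableSpace Ω] (μ : Measure Ω) (X : Ω → ℝ) (θ : ℝ) : Prop :=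
  Measurable X ∧ μ.map X = expLaw θ

section Helpers
open Set


lemma expLaw_eq_expMeasure {θ : ℝ} (hθ : 0 < θ) : expLaw θ = expMeasure (1/θ) := by
  rw [expLaw, expMeasure, gammaMeasure]
  congr 1
  funext t
  rw [show gammaPDF 1 (1/θ) t = exponentialPDF (1/θ) t from rfl, exponentialPDF_eq]
  congr 1
  split_ifs with h
  · rw [show -t/θ = -(1/θ * t) by ring]
  · rfl

lemma isProbExpLaw {θ : ℝ} (hθ : 0 < θ) : IsProbabilityMeasure (expLaw θ) := by
  rw [expLaw_eq_expMeasure hθ]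
  exact isProbabilityMeasure_expMeasure (by positivity)

lemma expLaw_Iic {θ : ℝ} (hθ : 0 < θ) (t : ℝ) :
    expLaw θ (Iic t) = ENNReal.ofReal (if 0 ≤ t then 1 - Real.exp (-t/θ) else 0) := by
  rw [expLaw_eq_expMeasure hθ]
  haveI := isProbabilityMeasure_expMeasure (show 0 < 1/θ by positivity)
  rw [← ProbabilityTheory.ofReal_cdf]
  rw [cdf_expMeasure_eq (by positivity)]
  congr 1
  split_ifs with h
  · rw [show -(1/θ*t) = -t/θ by ring]
  · rfl

lemma expLaw_singleton {θ t : ℝ} : expLaw θ {t} = 0 := by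
  rw [expLaw, withDensity_apply _ (measurableSet_singleton _)]
  exact setLIntegral_measure_zero _ _ (measure_singleton t)

lemma expLaw_Ici {θ : ℝ} (hθ : 0 < θ) (t : ℝ) :
    expLaw θ (Ici t) = ENNReal.ofReal (Real.exp (-(max t 0) / θ)) := by
  haveI := isProbExpLaw hθ
  have hIio : expLaw θ (Iio t) = ENNReal.ofReal (if 0 ≤ t then 1 - Real.exp (-t / θ) else 0) := by
    have h1 : expLaw θ (Iic t) = expLaw θ (Iio t) + expLaw θ {t} := by
      rw [← measure_union (by simp) (measurableSet_singleton t), Iio_union_right]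
    rw [expLaw_singleton, add_zero] at h1
    rw [← h1, expLaw_Iic hθ]
  rw [← compl_Iio, measure_compl measurableSet_Iio (measure_ne_top _ _), measure_univ, hIio]
  split_ifs with h
  · rw [max_eq_left h]
    rw [ENNReal.ofReal_sub _ (exp_nonneg _), ENNReal.ofReal_one]
    exact ENNReal.sub_sub_cancel ENNReal.one_ne_top
      (ENNReal.ofReal_le_one.mpr (Real.exp_le_one_iff.mpr (by rw [neg_div]; exact neg_nonpos.2 (by positivity))))
  · rw [max_eq_right (le_of_not_ge h)]
    simp

lemma expLaw_density_measurable (θ : ℝ) :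
    Measurable fun t => ENNReal.ofReal (if 0 ≤ t then (1/θ) * Real.exp (-t/θ) else 0) := by
  apply Measurable.ennreal_ofReal
  exact Measurable.ite measurableSet_Ici (by fun_prop) measurable_const

lemma hypo_nonneg {γ ζ t : ℝ} (hγ : 0 < γ) (hζ : 0 < ζ) (ht : 0 ≤ t) :
    0 ≤ (γ * Real.exp (-t/γ) - ζ * Real.exp (-t/ζ)) / (γ - ζ) := by
  rcases lt_trichotomy γ ζ with h | h | h
  · apply div_nonneg_of_nonpos _ (by linarith)
    have hAB : Real.exp (-t/γ) ≤ Real.exp (-t/ζ) := by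
      apply Real.exp_le_exp.2
      rw [neg_div, neg_div, neg_le_neg_iff]
      exact div_le_div_of_nonneg_left ht hγ h.le
    nlinarith [Real.exp_pos (-t/γ)]
  · subst h; simp
  · apply div_nonneg _ (by linarith)
    have hAB : Real.exp (-t/ζ) ≤ Real.exp (-t/γ) := by
      apply Real.exp_le_exp.2
      rw [neg_div, neg_div, neg_le_neg_iff]
      exact div_le_div_of_nonneg_left ht hζ h.le
    nlinarith [Real.exp_pos (-t/ζ)]

lemma expLaw_prod_tail {γ ζ : ℝ} (hγ : 0 < γ) (hζ : 0 < ζ) (hne : γ ≠ ζ) {t : ℝ} (ht : 0 ≤ t) :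
    ((expLaw γ).prod (expLaw ζ)) {p : ℝ × ℝ | t ≤ p.1 + p.2}
      = ENNReal.ofReal ((γ * Real.exp (-t/γ) - ζ * Real.exp (-t/ζ)) / (γ - ζ)) := by
  haveI := isProbExpLaw hγ; haveI := isProbExpLaw hζ
  have hm : MeasurableSet {p : ℝ × ℝ | t ≤ p.1 + p.2} :=
    measurableSet_le measurable_const (measurable_fst.add measurable_snd)
  rw [Measure.prod_apply hm]
  have hpre : ∀ x : ℝ, (Prod.mk x ⁻¹' {p : ℝ × ℝ | t ≤ p.1 + p.2}) = Ici (t - x) := by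
    intro x; ext y
    simp only [mem_preimage, mem_setOf_eq, mem_Ici]
    constructor <;> intro h <;> linarith
  simp_rw [hpre, expLaw_Ici hζ]
  rw [show expLaw γ = volume.withDensity
      (fun x => ENNReal.ofReal (if 0 ≤ x then (1/γ) * Real.exp (-x/γ) else 0)) from rfl]
  rw [lintegral_withDensity_eq_lintegral_mul _ (expLaw_density_measurable γ)
      (by fun_prop : Measurable fun x => ENNReal.ofReal (Real.exp (-(max (t-x) 0)/ζ)))]
  rw [← lintegral_add_compl _ (measurableSet_Iio (a := (0:ℝ)))]
  simp only [Pi.mul_apply]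
  have hzero : ∫⁻ x in Iio (0:ℝ),
      (ENNReal.ofReal (if 0 ≤ x then (1/γ) * Real.exp (-x/γ) else 0)
        * ENNReal.ofReal (Real.exp (-(max (t-x) 0)/ζ))) = 0 := by
    rw [setLIntegral_congr_fun_ae measurableSet_Iio
      (ae_of_all _ (fun x (hx : x < 0) => by
        rw [if_neg (not_le.2 hx), ENNReal.ofReal_zero, zero_mul]))]
    simp
  rw [hzero, zero_add, compl_Iio, ← Ico_union_Ici_eq_Ici ht,
      lintegral_union measurableSet_Ici (Set.disjoint_left.2 fun x hx hx' => absurd hx' (not_le.2 hx.2))]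
  have hIci : ∫⁻ x in Ici t,
      (ENNReal.ofReal (if 0 ≤ x then (1/γ) * Real.exp (-x/γ) else 0)
        * ENNReal.ofReal (Real.exp (-(max (t-x) 0)/ζ))) = ENNReal.ofReal (Real.exp (-t/γ)) := by
    rw [setLIntegral_congr_fun_ae measurableSet_Ici
      (ae_of_all _ (fun x (hx : t ≤ x) => by
        rw [max_eq_right (sub_nonpos.2 hx), neg_zero, zero_div, Real.exp_zero,
          ENNReal.ofReal_one, mul_one]))]
    rw [← withDensity_apply _ measurableSet_Ici]
    rw [show (volume.withDensity
      (fun x => ENNReal.ofReal (if 0 ≤ x then (1/γ) * Real.exp (-x/γ) else 0))) = expLaw γ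
      from rfl]
    rw [expLaw_Ici hγ, max_eq_left ht]
  rw [hIci]
  have hc : (1/ζ - 1/γ) ≠ 0 := by
    refine sub_ne_zero.2 fun h => hne ?_
    field_simp at h
    exact h
  have hIco : ∫⁻ x in Ico 0 t,
      (ENNReal.ofReal (if 0 ≤ x then (1/γ) * Real.exp (-x/γ) else 0)
        * ENNReal.ofReal (Real.exp (-(max (t-x) 0)/ζ)))
      = ENNReal.ofReal ((1/γ) * Real.exp (-t/ζ)
          * ((1/ζ - 1/γ)⁻¹ * (Real.exp ((1/ζ - 1/γ) * t) - 1))) := by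
    rw [setLIntegral_congr_fun_ae measurableSet_Ico
      (ae_of_all _ (fun x (hx : x ∈ Ico 0 t) => by
        rw [if_pos hx.1, max_eq_left (sub_nonneg.2 hx.2.le),
          ← ENNReal.ofReal_mul (by positivity)]))]
    rw [← ofReal_integral_eq_lintegral_ofReal]
    · congr 1
      rw [integral_Ico_eq_integral_Ioo, ← integral_Ioc_eq_integral_Ioo, ← intervalIntegral.integral_of_le ht]
      have hrw : ∀ x : ℝ, (1/γ) * Real.exp (-x/γ) * Real.exp (-(t-x)/ζ)
          = (1/γ) * Real.exp (-t/ζ) * Real.exp ((1/ζ - 1/γ) * x) := by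
        intro x
        rw [mul_assoc, mul_assoc, ← Real.exp_add, ← Real.exp_add]
        congr 1
        field_simp
        ring
      simp_rw [hrw]
      rw [intervalIntegral.integral_const_mul]
      congr 1
      have : ∀ x : ℝ, Real.exp ((1/ζ - 1/γ) * x) = Real.exp ((1/ζ-1/γ) * x) := fun _ => rfl
      rw [intervalIntegral.integral_comp_mul_left (fun y => Real.exp y) hc]
      rw [mul_zero, integral_exp, Real.exp_zero, smul_eq_mul]
    · apply (Continuous.integrableOn_Icc (by fun_prop)).mono_set Ico_subset_Icc_self
    · exact ae_of_all _ (fun x => by positivity)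
  have hJnn : 0 ≤ (1/ζ-1/γ)⁻¹ * (Real.exp ((1/ζ-1/γ)*t) - 1) := by
    rcases hc.lt_or_gt with h|h
    · have h1 : Real.exp ((1/ζ-1/γ)*t) ≤ 1 :=
        Real.exp_le_one_iff.2 (mul_nonpos_of_nonpos_of_nonneg h.le ht)
      have h2 : (1/ζ-1/γ)⁻¹ ≤ 0 := inv_nonpos.2 h.le
      nlinarith
    · have h1 : 1 ≤ Real.exp ((1/ζ-1/γ)*t) := Real.one_le_exp (mul_nonneg h.le ht)
      have h2 : 0 ≤ (1/ζ-1/γ)⁻¹ := inv_nonneg.2 h.le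
      nlinarith
  rw [hIco, ← ENNReal.ofReal_add (mul_nonneg (by positivity) hJnn) (by positivity)]
  congr 1
  have hE : Real.exp ((1/ζ - 1/γ) * t) = Real.exp (-t/γ) / Real.exp (-t/ζ) := by
    rw [← Real.exp_sub]; congr 1; field_simp; ring
  rw [hE]
  have hB := Real.exp_pos (-t/ζ)
  have hgz : γ - ζ ≠ 0 := sub_ne_zero.2 hne
  field_simp
  ring

lemma tail_of_isExpMean {Ω : Type*} [MeasurableSpace Ω] {μ : Measure Ω} {X : Ω → ℝ} {θ : ℝ}
    (hθ : 0 < θ) (hX : IsExpMean μ X θ) {t : ℝ} (ht : 0 ≤ t) :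
    μ {ω | t ≤ X ω} = ENNReal.ofReal (Real.exp (-t/θ)) := by
  rw [show {ω | t ≤ X ω} = X ⁻¹' Ici t from rfl,
    ← Measure.map_apply hX.1 measurableSet_Ici, hX.2, expLaw_Ici hθ, max_eq_left ht]

lemma pos_ae_of_isExpMean {Ω : Type*} [MeasurableSpace Ω] {μ : Measure Ω} {X : Ω → ℝ} {θ : ℝ}
    (hθ : 0 < θ) (hX : IsExpMean μ X θ) : ∀ᵐ ω ∂μ, 0 < X ω := by
  rw [ae_iff]
  have h : {ω | ¬ 0 < X ω} = X ⁻¹' Iic 0 := by ext ω; simp [not_lt]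
  rw [h, ← Measure.map_apply hX.1 measurableSet_Iic, hX.2, expLaw_Iic hθ]
  simp

lemma outage_iff {R B T x : ℝ} (hR : 0 < R) (hB : 0 < B) (hT : 0 < T) (hx : 0 < x) :
    (T < R / (B * Real.logb 2 (1 + x))) ↔ x < 2 ^ (R / (B * T)) - 1 := by
  have h2 : (1:ℝ) < 2 := one_lt_two
  have hL : 0 < Real.logb 2 (1 + x) := Real.logb_pos h2 (by linarith)
  have h1 : (T < R / (B * Real.logb 2 (1+x))) ↔ Real.logb 2 (1+x) < R / (B*T) := by
    rw [lt_div_iff₀ (by positivity), lt_div_iff₀ (by positivity)]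
    constructor <;> intro h <;> nlinarith
  rw [h1, Real.logb_lt_iff_lt_rpow h2 (by linarith)]
  constructor <;> intro h <;> linarith

lemma outage_min_iff {R B T x y : ℝ} (hR : 0 < R) (hB : 0 < B) (hT : 0 < T)
    (hx : 0 < x) (hy : 0 < y) :
    (T < R / (B * min (Real.logb 2 (1+x)) (Real.logb 2 (1+y))))
      ↔ min x y < 2 ^ (R / (B * T)) - 1 := by
  have hmin : min (Real.logb 2 (1+x)) (Real.logb 2 (1+y)) = Real.logb 2 (1 + min x y) := by
    rcases le_total x y with h | h
    · rw [min_eq_left h,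
        min_eq_left (Real.logb_le_logb_of_le one_lt_two (by linarith) (by linarith))]
    · rw [min_eq_right h,
        min_eq_right (Real.logb_le_logb_of_le one_lt_two (by linarith) (by linarith))]
  rw [hmin]
  exact outage_iff hR hB hT (lt_min hx hy)

lemma one_lt_two_rpow {y : ℝ} (hy : 0 < y) : (1:ℝ) < 2 ^ y :=
  (Real.one_lt_rpow_iff_of_pos (by norm_num)).2 (Or.inl ⟨one_lt_two, hy⟩)

end Helpers

/-- **Delay outage rate (Theorem 2), explicit single-port case.**
With `γi = Ei` and `κi = E'i + Zi` built from six mutually independent exponential random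
variables (`Ei, E'i` of mean `γ̄i`, `Zi` of mean `ζ̄i`, `γ̄i ≠ ζ̄i`), the delay outage rate equals
`1 − e^{−T̂1/γ̄1} · e^{−T̂2/γ̄2} · ∏_{i=1,2} (γ̄i e^{−T̂sum/γ̄i} − ζ̄i e^{−T̂sum/ζ̄i})/(γ̄i − ζ̄i)`. -/
theorem delay_outage_rate_explicit
    {Ω : Type*} [MeasurableSpace Ω] (μ : Measure Ω) [IsProbabilityMeasure μ]
    (γm1 γm2 ζm1 ζm2 : ℝ) (hγm1 : 0 < γm1) (hγm2 : 0 < γm2) (hζm1 : 0 < ζm1) (hζm2 : 0 < ζm2)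
    (hne1 : γm1 ≠ ζm1) (hne2 : γm2 ≠ ζm2)
    (E1 E2 E1' E2' Z1 Z2 : Ω → ℝ)
    (hE1 : IsExpMean μ E1 γm1) (hE2 : IsExpMean μ E2 γm2)
    (hE1' : IsExpMean μ E1' γm1) (hE2' : IsExpMean μ E2' γm2)
    (hZ1 : IsExpMean μ Z1 ζm1) (hZ2 : IsExpMean μ Z2 ζm2)
    (hindep : iIndepFun ![E1, E2, E1', E2', Z1, Z2] μ)
    (R1 R2 B1 B2 Bsum T1 T2 Tsum : ℝ)
    (hR1 : 0 < R1) (hR2 : 0 < R2) (hB1 : 0 < B1) (hB2 : 0 < B2) (hBsum : 0 < Bsum)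
    (hT1 : 0 < T1) (hT2 : 0 < T2) (hTsum : 0 < Tsum) :
    (μ ({ω | R1 / (B1 * Real.logb 2 (1 + E1 ω)) > T1} ∪
        {ω | R2 / (B2 * Real.logb 2 (1 + E2 ω)) > T2} ∪
        {ω | (R1 + R2) /
              (Bsum * min (Real.logb 2 (1 + (E1' ω + Z1 ω)))
                          (Real.logb 2 (1 + (E2' ω + Z2 ω)))) > Tsum})).toReal =
      1 - Real.exp (-((2 : ℝ) ^ (R1 / (B1 * T1)) - 1) / γm1)
          * Real.exp (-((2 : ℝ) ^ (R2 / (B2 * T2)) - 1) / γm2)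
          * ((γm1 * Real.exp (-((2 : ℝ) ^ ((R1 + R2) / (Bsum * Tsum)) - 1) / γm1)
              - ζm1 * Real.exp (-((2 : ℝ) ^ ((R1 + R2) / (Bsum * Tsum)) - 1) / ζm1)) / (γm1 - ζm1))
          * ((γm2 * Real.exp (-((2 : ℝ) ^ ((R1 + R2) / (Bsum * Tsum)) - 1) / γm2)
              - ζm2 * Real.exp (-((2 : ℝ) ^ ((R1 + R2) / (Bsum * Tsum)) - 1) / ζm2)) / (γm2 - ζm2)) := by
  classical
  have hmeasF : ∀ i, Measurable (![E1, E2, E1', E2', Z1, Z2] i) := by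
    intro i
    fin_cases i
    · exact hE1.1
    · exact hE2.1
    · exact hE1'.1
    · exact hE2'.1
    · exact hZ1.1
    · exact hZ2.1
  set a1 : ℝ := 2 ^ (R1 / (B1 * T1)) - 1 with ha1def
  set a2 : ℝ := 2 ^ (R2 / (B2 * T2)) - 1 with ha2def
  set as : ℝ := 2 ^ ((R1 + R2) / (Bsum * Tsum)) - 1 with hasdef
  have ha1 : 0 < a1 := sub_pos.2 (one_lt_two_rpow (by positivity))
  have ha2 : 0 < a2 := sub_pos.2 (one_lt_two_rpow (by positivity))
  have has : 0 < as := sub_pos.2 (one_lt_two_rpow (by positivity))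
  set W1 : Set Ω := {ω | a1 ≤ E1 ω} with hW1def
  set W2 : Set Ω := {ω | a2 ≤ E2 ω} with hW2def
  set W3 : Set Ω := {ω | as ≤ E1' ω + Z1 ω} with hW3def
  set W4 : Set Ω := {ω | as ≤ E2' ω + Z2 ω} with hW4def
  -- Step 1: the outage event a.e. equals the complement of W1 ∩ (W2 ∩ (W3 ∩ W4))
  have hU : μ ({ω | R1 / (B1 * Real.logb 2 (1 + E1 ω)) > T1} ∪
        {ω | R2 / (B2 * Real.logb 2 (1 + E2 ω)) > T2} ∪
        {ω | (R1 + R2) /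
              (Bsum * min (Real.logb 2 (1 + (E1' ω + Z1 ω)))
                          (Real.logb 2 (1 + (E2' ω + Z2 ω)))) > Tsum})
      = μ ((W1 ∩ (W2 ∩ (W3 ∩ W4)))ᶜ) := by
    apply measure_congr
    rw [Filter.eventuallyEq_set]
    filter_upwards [pos_ae_of_isExpMean hγm1 hE1, pos_ae_of_isExpMean hγm2 hE2,
      pos_ae_of_isExpMean hγm1 hE1', pos_ae_of_isExpMean hγm2 hE2',
      pos_ae_of_isExpMean hζm1 hZ1, pos_ae_of_isExpMean hζm2 hZ2]
      with ω h1 h2 h3 h4 h5 h6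
    simp only [hW1def, hW2def, hW3def, hW4def, Set.mem_union, Set.mem_setOf_eq,
      Set.mem_compl_iff, Set.mem_inter_iff, eq_iff_iff, gt_iff_lt]
    rw [outage_iff hR1 hB1 hT1 h1, outage_iff hR2 hB2 hT2 h2,
        outage_min_iff (by positivity) hBsum hTsum (by positivity : (0:ℝ) < E1' ω + Z1 ω)
          (by positivity : (0:ℝ) < E2' ω + Z2 ω), min_lt_iff]
    rw [← ha1def, ← ha2def, ← hasdef]
    simp only [not_and_or, not_le]
    tauto
  rw [hU]
  -- Step 2: independence factorization
  have hmW1 : MeasurableSet W1 := measurableSet_le measurable_const hE1.1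
  have hmW2 : MeasurableSet W2 := measurableSet_le measurable_const hE2.1
  have hmW3 : MeasurableSet W3 := measurableSet_le measurable_const (hE1'.1.add hZ1.1)
  have hmW4 : MeasurableSet W4 := measurableSet_le measurable_const (hE2'.1.add hZ2.1)
  have hstep1 : μ (W1 ∩ (W2 ∩ (W3 ∩ W4))) = μ W1 * μ (W2 ∩ (W3 ∩ W4)) := by
    have hind := hindep.indepFun_finset {0} {1, 2, 3, 4, 5} (by decide) hmeasF
    have := hind.measure_inter_preimage_eq_mul
      {v : ({0} : Finset (Fin 6)) → ℝ | a1 ≤ v ⟨0, by decide⟩}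
      {v : ({1, 2, 3, 4, 5} : Finset (Fin 6)) → ℝ |
        a2 ≤ v ⟨1, by decide⟩ ∧ (as ≤ v ⟨2, by decide⟩ + v ⟨4, by decide⟩
          ∧ as ≤ v ⟨3, by decide⟩ + v ⟨5, by decide⟩)}
      (measurableSet_le measurable_const (measurable_pi_apply _))
      (MeasurableSet.inter
        (measurableSet_le measurable_const (measurable_pi_apply (⟨1, by decide⟩ : ({1, 2, 3, 4, 5} : Finset (Fin 6)))))
        (MeasurableSet.inter
          (measurableSet_le measurable_const
            ((measurable_pi_apply (⟨2, by decide⟩ : ({1, 2, 3, 4, 5} : Finset (Fin 6)))).add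
              (measurable_pi_apply (⟨4, by decide⟩ : ({1, 2, 3, 4, 5} : Finset (Fin 6))))))
          (measurableSet_le measurable_const
            ((measurable_pi_apply (⟨3, by decide⟩ : ({1, 2, 3, 4, 5} : Finset (Fin 6)))).add
              (measurable_pi_apply (⟨5, by decide⟩ : ({1, 2, 3, 4, 5} : Finset (Fin 6))))))))
    exact this
  have hstep2 : μ (W2 ∩ (W3 ∩ W4)) = μ W2 * μ (W3 ∩ W4) := by
    have hind := hindep.indepFun_finset {1} {2, 3, 4, 5} (by decide) hmeasF
    have := hind.measure_inter_preimage_eq_mul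
      {v : ({1} : Finset (Fin 6)) → ℝ | a2 ≤ v ⟨1, by decide⟩}
      {v : ({2, 3, 4, 5} : Finset (Fin 6)) → ℝ |
        as ≤ v ⟨2, by decide⟩ + v ⟨4, by decide⟩ ∧ as ≤ v ⟨3, by decide⟩ + v ⟨5, by decide⟩}
      (measurableSet_le measurable_const (measurable_pi_apply _))
      (MeasurableSet.inter
        (measurableSet_le measurable_const
          ((measurable_pi_apply (⟨2, by decide⟩ : ({2, 3, 4, 5} : Finset (Fin 6)))).add
            (measurable_pi_apply (⟨4, by decide⟩ : ({2, 3, 4, 5} : Finset (Fin 6))))))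
        (measurableSet_le measurable_const
          ((measurable_pi_apply (⟨3, by decide⟩ : ({2, 3, 4, 5} : Finset (Fin 6)))).add
            (measurable_pi_apply (⟨5, by decide⟩ : ({2, 3, 4, 5} : Finset (Fin 6)))))))
    exact this
  have hstep3 : μ (W3 ∩ W4) = μ W3 * μ W4 := by
    have hind := hindep.indepFun_prodMk_prodMk hmeasF 2 4 3 5
      (by decide) (by decide) (by decide) (by decide)
    have := hind.measure_inter_preimage_eq_mul
      (s := {p : ℝ × ℝ | as ≤ p.1 + p.2}) (t := {p : ℝ × ℝ | as ≤ p.1 + p.2})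
      (measurableSet_le measurable_const (measurable_fst.add measurable_snd))
      (measurableSet_le measurable_const (measurable_fst.add measurable_snd))
    exact this
  -- Step 3: individual tails
  have hW1v : μ W1 = ENNReal.ofReal (Real.exp (-a1/γm1)) := tail_of_isExpMean hγm1 hE1 ha1.le
  have hW2v : μ W2 = ENNReal.ofReal (Real.exp (-a2/γm2)) := tail_of_isExpMean hγm2 hE2 ha2.le
  have hW3v : μ W3 = ENNReal.ofReal
      ((γm1 * Real.exp (-as/γm1) - ζm1 * Real.exp (-as/ζm1)) / (γm1 - ζm1)) := by
    have hpair : IndepFun E1' Z1 μ := hindep.indepFun (show (2 : Fin 6) ≠ 4 by decide)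
    have hmap : μ.map (fun ω => (E1' ω, Z1 ω)) = (expLaw γm1).prod (expLaw ζm1) := by
      rw [(indepFun_iff_map_prod_eq_prod_map_map hE1'.1.aemeasurable hZ1.1.aemeasurable).1 hpair,
        hE1'.2, hZ1.2]
    have hset : W3 = (fun ω => (E1' ω, Z1 ω)) ⁻¹' {p : ℝ × ℝ | as ≤ p.1 + p.2} := rfl
    rw [hset, ← Measure.map_apply (hE1'.1.prodMk hZ1.1)
        (measurableSet_le measurable_const (measurable_fst.add measurable_snd) :
          MeasurableSet {p : ℝ × ℝ | as ≤ p.1 + p.2}),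
      hmap, expLaw_prod_tail hγm1 hζm1 hne1 has.le]
  have hW4v : μ W4 = ENNReal.ofReal
      ((γm2 * Real.exp (-as/γm2) - ζm2 * Real.exp (-as/ζm2)) / (γm2 - ζm2)) := by
    have hpair : IndepFun E2' Z2 μ := hindep.indepFun (show (3 : Fin 6) ≠ 5 by decide)
    have hmap : μ.map (fun ω => (E2' ω, Z2 ω)) = (expLaw γm2).prod (expLaw ζm2) := by
      rw [(indepFun_iff_map_prod_eq_prod_map_map hE2'.1.aemeasurable hZ2.1.aemeasurable).1 hpair,
        hE2'.2, hZ2.2]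
    have hset : W4 = (fun ω => (E2' ω, Z2 ω)) ⁻¹' {p : ℝ × ℝ | as ≤ p.1 + p.2} := rfl
    rw [hset, ← Measure.map_apply (hE2'.1.prodMk hZ2.1)
        (measurableSet_le measurable_const (measurable_fst.add measurable_snd) :
          MeasurableSet {p : ℝ × ℝ | as ≤ p.1 + p.2}),
      hmap, expLaw_prod_tail hγm2 hζm2 hne2 has.le]
  -- Step 4: put it together
  have hle : μ W1 * (μ W2 * (μ W3 * μ W4)) ≤ 1 := by
    rw [← hstep3, ← hstep2, ← hstep1]
    exact prob_le_one
  rw [measure_compl (hmW1.inter (hmW2.inter (hmW3.inter hmW4))) (measure_ne_top _ _),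
    measure_univ, hstep1, hstep2, hstep3,
    ENNReal.toReal_sub_of_le hle ENNReal.one_ne_top, hW1v, hW2v, hW3v, hW4v,
    ENNReal.toReal_one, ENNReal.toReal_mul, ENNReal.toReal_mul, ENNReal.toReal_mul,
    ENNReal.toReal_ofReal (Real.exp_nonneg _), ENNReal.toReal_ofReal (Real.exp_nonneg _),
    ENNReal.toReal_ofReal (hypo_nonneg hγm1 hζm1 has.le),
    ENNReal.toReal_ofReal (hypo_nonneg hγm2 hζm2 has.le)]
  ring
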